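/- For a partition ν = (ν_1,...,ν_l) with g(ν) = gcd(ν_1,...,ν_l), the polynomial G_ν(t) = (t A_{l−1}(t) ∏_{i=1}^l [ν_i]_t)_{g(ν)} satisfies G_ν(t) = Σ_{d | g(ν)} μ(d) d^{l−1} t^d A_{l−1}(t^d) ∏_{i=1}^l [ν_i/d]_{t^d}, where μ is the Möbius function. -/

import Mathlib

open Finset Equiv
open scoped PowerSeries

/-- The excedance number `exc(σ) = |{i : σ(i) > i}|`. -/
def excNum {n : ℕ} (σ : Equiv.Perm (Fin n)) : ℕ :=
  (Finset.univ.filter fun i : Fin n => (i : ℕ) < (σ i : ℕ)).card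

/-- The number of fixed points `fix(σ) = |{i : σ(i) = i}|`. -/
def fixNum {n : ℕ} (σ : Equiv.Perm (Fin n)) : ℕ :=
  (Finset.univ.filter fun i : Fin n => σ i = i).card

/-- The value `σ(i)`, with positions indexed by `0, …, n-1`. -/
def permVal {n : ℕ} (σ : Equiv.Perm (Fin n)) (i : ℕ) : ℕ :=
  if h : i < n then (σ ⟨i, h⟩ : ℕ) else 0

/-- The descent set of `σ` (0-indexed positions). -/
def desSet {n : ℕ} (σ : Equiv.Perm (Fin n)) : Finset ℕ :=
  (Finset.range (n - 1)).filter fun i => permVal σ (i + 1) < permVal σ i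

/-- The descent number `des(σ)`. -/
def desNum {n : ℕ} (σ : Equiv.Perm (Fin n)) : ℕ := (desSet σ).card

/-- The major index `maj(σ) = Σ_{i ∈ Des(σ)} i` (with positions counted `1, …, n-1`). -/
def majNum {n : ℕ} (σ : Equiv.Perm (Fin n)) : ℕ := ∑ i ∈ desSet σ, (i + 1)

/-- The Eulerian polynomial `A_n(t) = Σ_{σ ∈ S_n} t^{exc(σ)}`. -/
noncomputable def eulerianExc (n : ℕ) : Polynomial ℚ :=
  ∑ σ : Equiv.Perm (Fin n), Polynomial.X ^ excNum σ

/-- The Eulerian polynomial `A_n(t) = Σ_{σ ∈ S_n} t^{des(σ)}`. -/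
noncomputable def eulerianDes (n : ℕ) : Polynomial ℚ :=
  ∑ σ : Equiv.Perm (Fin n), Polynomial.X ^ desNum σ

/-- The operation `f(t) ↦ f(t)_m` erasing all terms `a_j t^j` with `gcd(j, m) ≠ 1`. -/
noncomputable def restrictCoprime (m : ℕ) (f : Polynomial ℚ) : Polynomial ℚ :=
  ∑ j ∈ f.support.filter (fun j => Nat.gcd j m = 1), Polynomial.monomial j (f.coeff j)

noncomputable def sect (d : ℕ) (f : Polynomial ℚ) : Polynomial ℚ :=
  ∑ j ∈ f.support.filter (fun j => d ∣ j), Polynomial.monomial j (f.coeff j)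

lemma coeff_filter_sum (p : ℕ → Prop) [DecidablePred p] (f : Polynomial ℚ) (k : ℕ) :
    (∑ j ∈ f.support.filter p, Polynomial.monomial j (f.coeff j)).coeff k
      = if p k then f.coeff k else 0 := by
  rw [Polynomial.finset_sum_coeff]
  simp only [Polynomial.coeff_monomial]
  rw [Finset.sum_ite_eq' (f.support.filter p) k (fun j => f.coeff j)]
  by_cases hs : f.coeff k = 0
  · simp [hs]
  · simp [Finset.mem_filter, Polynomial.mem_support_iff, hs]

lemma coeff_sect (d : ℕ) (f : Polynomial ℚ) (k : ℕ) :
    (sect d f).coeff k = if d ∣ k then f.coeff k else 0 :=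
  coeff_filter_sum _ f k

lemma coeff_restrictCoprime (m : ℕ) (f : Polynomial ℚ) (k : ℕ) :
    (restrictCoprime m f).coeff k = if Nat.gcd k m = 1 then f.coeff k else 0 :=
  coeff_filter_sum _ f k

lemma sum_moebius_divisors (n : ℕ) :
    (∑ d ∈ n.divisors, (ArithmeticFunction.moebius d : ℤ)) = if n = 1 then 1 else 0 := by
  have h2 : ((ArithmeticFunction.moebius * ↑ArithmeticFunction.zeta : ArithmeticFunction ℤ)) n
      = ∑ d ∈ n.divisors, (ArithmeticFunction.moebius d : ℤ) :=
    ArithmeticFunction.coe_mul_zeta_apply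
  rw [ArithmeticFunction.moebius_mul_coe_zeta] at h2
  rw [← h2, ArithmeticFunction.one_apply]

lemma restrictCoprime_eq_sum_sect (m : ℕ) (hm : m ≠ 0) (f : Polynomial ℚ) :
    restrictCoprime m f
      = ∑ d ∈ m.divisors, Polynomial.C ((ArithmeticFunction.moebius d : ℤ) : ℚ) * sect d f := by
  ext k
  rw [coeff_restrictCoprime, Polynomial.finset_sum_coeff]
  simp only [Polynomial.coeff_C_mul, coeff_sect, mul_ite, mul_zero]
  rw [← Finset.sum_filter]
  have hdiv : m.divisors.filter (fun d => d ∣ k) = (Nat.gcd k m).divisors := by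
    ext e
    simp only [Finset.mem_filter, Nat.mem_divisors, Nat.dvd_gcd_iff]
    constructor
    · rintro ⟨⟨h1, h2⟩, h3⟩; exact ⟨⟨h3, h1⟩, Nat.gcd_ne_zero_right hm⟩
    · rintro ⟨⟨h1, h2⟩, _⟩; exact ⟨⟨h2, hm⟩, h1⟩
  rw [hdiv, ← Finset.sum_mul]
  have : (∑ d ∈ (Nat.gcd k m).divisors, ((ArithmeticFunction.moebius d : ℤ) : ℚ))
      = if Nat.gcd k m = 1 then 1 else 0 := by
    rw [← Int.cast_sum, sum_moebius_divisors]
    split_ifs <;> simp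
  rw [this]
  split_ifs <;> simp

lemma expand_geom (e m : ℕ) :
    Polynomial.expand ℚ e (∑ j ∈ Finset.range m, Polynomial.X ^ j)
      = ∑ j ∈ Finset.range m, (Polynomial.X ^ e) ^ j := by
  rw [map_sum]
  exact Finset.sum_congr rfl fun j _ => by rw [map_pow, Polynomial.expand_X]

lemma geom_factor (e ν : ℕ) (hd : e ∣ ν) :
    (∑ j ∈ Finset.range ν, (Polynomial.X : Polynomial ℚ) ^ j)
      = (∑ j ∈ Finset.range e, Polynomial.X ^ j)
        * Polynomial.expand ℚ e (∑ j ∈ Finset.range (ν / e), Polynomial.X ^ j) := by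
  have hX : (Polynomial.X - 1 : Polynomial ℚ) ≠ 0 := by
    rw [show (1 : Polynomial ℚ) = Polynomial.C 1 by simp]
    exact Polynomial.X_sub_C_ne_zero 1
  apply mul_right_cancel₀ hX
  rw [geom_sum_mul, mul_assoc, mul_comm (Polynomial.expand ℚ e _), ← mul_assoc, geom_sum_mul]
  have h1 : (Polynomial.X ^ e - 1 : Polynomial ℚ) = Polynomial.expand ℚ e (Polynomial.X - 1) := by
    rw [map_sub, Polynomial.expand_X, map_one]
  rw [h1, ← map_mul, mul_geom_sum, map_sub, map_one, map_pow, Polynomial.expand_X, ← pow_mul,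
    Nat.mul_div_cancel' hd]


lemma sect_add (e : ℕ) (f g : Polynomial ℚ) : sect e (f + g) = sect e f + sect e g := by
  ext k
  simp only [coeff_sect, Polynomial.coeff_add]
  split_ifs <;> simp

lemma sect_mul_expand (e : ℕ) (he : 0 < e) (P Q : Polynomial ℚ) :
    sect e (P * Polynomial.expand ℚ e Q) = sect e P * Polynomial.expand ℚ e Q := by
  induction Q using Polynomial.induction_on' with
  | add f g hf hg => rw [map_add, mul_add, sect_add, hf, hg, mul_add]
  | monomial q a =>
    rw [Polynomial.expand_monomial]
    ext k
    rw [← Polynomial.C_mul_X_pow_eq_monomial, ← mul_assoc, ← mul_assoc]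
    rw [Polynomial.coeff_mul_X_pow', coeff_sect, Polynomial.coeff_mul_X_pow']
    simp only [coeff_sect, Polynomial.coeff_mul_C]
    have hqe : e ∣ q * e := dvd_mul_left e q
    by_cases hle : q * e ≤ k
    · have hiff : e ∣ k ↔ e ∣ k - q * e := by
        constructor
        · intro h; exact Nat.dvd_sub h hqe
        · intro h
          have := Nat.dvd_add h hqe
          rwa [Nat.sub_add_cancel hle] at this
      simp only [if_pos hle]
      by_cases hdk : e ∣ k
      · rw [if_pos hdk, if_pos (hiff.mp hdk)]
      · rw [if_neg hdk, if_neg (fun h => hdk (hiff.mpr h)), zero_mul]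
    · simp only [if_neg hle]
      split_ifs <;> simp

lemma excNum_eq_sum {n : ℕ} (σ : Equiv.Perm (Fin n)) :
    excNum σ = ∑ i : Fin n, if (i : ℕ) < (σ i : ℕ) then 1 else 0 := by
  rw [excNum, Finset.card_filter]

lemma excNum_le {n : ℕ} (σ : Equiv.Perm (Fin n)) : excNum σ ≤ n := by
  classical
  calc excNum σ ≤ Finset.univ.card := Finset.card_filter_le _ _
  _ = n := by simp

lemma exc_decompose_zero {n : ℕ} (e : Equiv.Perm (Fin n)) :
    excNum (Equiv.Perm.decomposeFin.symm (0, e)) = excNum e := by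
  rw [excNum_eq_sum, Fin.sum_univ_succ, excNum_eq_sum]
  have h0 : Equiv.Perm.decomposeFin.symm (0, e) 0 = 0 :=
    Equiv.Perm.decomposeFin_symm_apply_zero 0 e
  rw [h0]
  have key : ∀ i : Fin n, Equiv.Perm.decomposeFin.symm (0, e) i.succ = (e i).succ := by
    intro i
    rw [Equiv.Perm.decomposeFin_symm_apply_succ e 0 i, Equiv.swap_self]
    rfl
  rw [Finset.sum_congr rfl (fun i _ => by rw [key i])]
  simp [Fin.val_succ]

lemma exc_decompose_succ {n : ℕ} (e : Equiv.Perm (Fin n)) (q : Fin n) :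
    excNum (Equiv.Perm.decomposeFin.symm (q.succ, e))
      = excNum e + (if ((e.symm q : ℕ) < (q : ℕ)) then 0 else 1) := by
  set σ := Equiv.Perm.decomposeFin.symm (q.succ, e) with hσ
  set i₀ := e.symm q with hi₀
  have he : e i₀ = q := e.apply_symm_apply q
  rw [excNum_eq_sum, Fin.sum_univ_succ]
  have h0 : σ 0 = q.succ := Equiv.Perm.decomposeFin_symm_apply_zero q.succ e
  have hterm0 : (if ((0 : Fin (n+1)) : ℕ) < ((σ 0 : Fin (n+1)) : ℕ) then 1 else 0) = 1 := by
    rw [h0]; simp [Fin.val_succ]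
  rw [hterm0]
  have key : ∀ i : Fin n,
      (if ((i.succ : Fin (n+1)) : ℕ) < ((σ i.succ : Fin (n+1)) : ℕ) then 1 else 0)
        = if (e i ≠ q ∧ (i : ℕ) < (e i : ℕ)) then 1 else 0 := by
    intro i
    have hs : σ i.succ = Equiv.swap 0 q.succ (e i).succ :=
      Equiv.Perm.decomposeFin_symm_apply_succ e q.succ i
    by_cases hiq : e i = q
    · rw [hs, hiq, Equiv.swap_apply_right]
      simp [hiq]
    · have h1 : (e i).succ ≠ 0 := Fin.succ_ne_zero _
      have h2 : (e i).succ ≠ q.succ := fun h => hiq (Fin.succ_injective _ h)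
      rw [hs, Equiv.swap_apply_of_ne_of_ne h1 h2]
      simp [hiq, Fin.val_succ]
  rw [Finset.sum_congr rfl (fun i _ => key i)]
  have hsum : (∑ i : Fin n, if (e i ≠ q ∧ (i : ℕ) < (e i : ℕ)) then 1 else 0)
      = ∑ i ∈ Finset.univ.erase i₀, (if ((i : ℕ) < (e i : ℕ)) then (1:ℕ) else 0) := by
    rw [← Finset.add_sum_erase Finset.univ _ (Finset.mem_univ i₀)]
    rw [if_neg (by simp [he])]
    rw [zero_add]
    refine Finset.sum_congr rfl fun i hi => ?_
    have hne : e i ≠ q := by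
      intro h
      exact (Finset.mem_erase.mp hi).1 (by rw [hi₀, ← h, Equiv.symm_apply_apply])
    simp [hne]
  rw [hsum, excNum_eq_sum,
    ← Finset.add_sum_erase Finset.univ (fun i : Fin n => if ((i:ℕ) < (e i : ℕ)) then (1:ℕ) else 0)
      (Finset.mem_univ i₀), he]
  by_cases hc : (i₀ : ℕ) < (q : ℕ) <;> simp [hc] <;> omega

lemma card_filter_symm {n : ℕ} (e : Equiv.Perm (Fin n)) :
    (Finset.univ.filter fun q : Fin n => ((e.symm q : ℕ) < (q : ℕ))).card = excNum e := by
  rw [excNum]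
  apply Finset.card_bij' (fun q _ => e.symm q) (fun i _ => e i)
  · intro q hq
    simp only [Finset.mem_filter, Finset.mem_univ, true_and] at hq ⊢
    rwa [e.apply_symm_apply]
  · intro i hi
    simp only [Finset.mem_filter, Finset.mem_univ, true_and] at hi ⊢
    rwa [e.symm_apply_apply]
  · intro q _; exact e.apply_symm_apply q
  · intro i _; exact e.symm_apply_apply i

lemma sum_decompose (n : ℕ) : eulerianExc (n+1) =
    ∑ e : Equiv.Perm (Fin n),
      ((1 + excNum e) • (Polynomial.X : Polynomial ℚ) ^ excNum e
        + (n - excNum e) • (Polynomial.X : Polynomial ℚ) ^ (excNum e + 1)) := by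
  rw [eulerianExc,
    ← Equiv.sum_comp Equiv.Perm.decomposeFin.symm
        (fun σ => (Polynomial.X : Polynomial ℚ) ^ excNum σ),
    Fintype.sum_prod_type, Finset.sum_comm]
  refine Finset.sum_congr rfl fun e _ => ?_
  rw [Fin.sum_univ_succ, exc_decompose_zero]
  have : ∀ q : Fin n,
      (Polynomial.X : Polynomial ℚ) ^ excNum (Equiv.Perm.decomposeFin.symm (q.succ, e))
        = if ((e.symm q : ℕ) < (q : ℕ)) then (Polynomial.X:Polynomial ℚ) ^ excNum e
          else (Polynomial.X:Polynomial ℚ) ^ (excNum e + 1) := by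
    intro q
    rw [exc_decompose_succ]
    split_ifs <;> simp
  rw [Finset.sum_congr rfl (fun q _ => this q), Finset.sum_ite, Finset.sum_const,
    Finset.sum_const, card_filter_symm]
  have hcard : (Finset.univ.filter fun q : Fin n => ¬ ((e.symm q : ℕ) < (q : ℕ))).card
      = n - excNum e := by
    have := Finset.card_filter_add_card_filter_not
      (s := (Finset.univ : Finset (Fin n))) (p := fun q : Fin n => ((e.symm q : ℕ) < (q : ℕ)))
    rw [card_filter_symm] at this
    simp only [Finset.card_univ, Fintype.card_fin] at this
    omega
  rw [hcard, add_nsmul, one_nsmul]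
  ring

lemma eulerian_rec (n : ℕ) :
    eulerianExc (n+1) = (1 + Polynomial.C (n:ℚ) * Polynomial.X) * eulerianExc n
      + Polynomial.X * (1 - Polynomial.X) * Polynomial.derivative (eulerianExc n) := by
  rw [sum_decompose, eulerianExc, Finset.mul_sum, map_sum, Finset.mul_sum, ← Finset.sum_add_distrib]
  refine Finset.sum_congr rfl fun e _ => ?_
  have hk := excNum_le e
  set k := excNum e with hkdef
  clear_value k
  rw [Polynomial.derivative_X_pow]
  rcases Nat.eq_zero_or_pos k with hk0 | hk0
  · subst hk0
    simp only [pow_zero, Nat.cast_zero, map_zero, zero_mul, mul_zero, Nat.sub_zero]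
    rw [add_nsmul, one_nsmul]
    simp only [Polynomial.C_eq_natCast]
    push_cast
    ring
  · have h1 : Polynomial.X * (1 - Polynomial.X) *
        (Polynomial.C (k:ℚ) * Polynomial.X ^ (k-1))
        = Polynomial.C (k:ℚ) * Polynomial.X ^ k - Polynomial.C (k:ℚ) * Polynomial.X ^ (k+1) := by
      have hx : Polynomial.X * (Polynomial.X:Polynomial ℚ) ^ (k-1) = Polynomial.X ^ k := by
        rw [← pow_succ', Nat.sub_add_cancel hk0]
      calc Polynomial.X * (1 - Polynomial.X) * (Polynomial.C (k:ℚ) * Polynomial.X ^ (k-1))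
          = Polynomial.C (k:ℚ) * (Polynomial.X * Polynomial.X ^ (k-1))
            - Polynomial.C (k:ℚ) * (Polynomial.X * Polynomial.X ^ (k-1)) * Polynomial.X := by ring
        _ = _ := by rw [hx]; ring
    rw [h1]
    have h2 : ((1 + k) • (Polynomial.X:Polynomial ℚ) ^ k)
        = Polynomial.X ^ k + Polynomial.C (k:ℚ) * Polynomial.X ^ k := by
      rw [add_nsmul, one_nsmul, nsmul_eq_mul]
      simp only [Polynomial.C_eq_natCast]
      try push_cast
      try ring
    have h3 : ((n - k) • (Polynomial.X:Polynomial ℚ) ^ (k+1))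
        = Polynomial.C (n:ℚ) * Polynomial.X ^ (k+1) - Polynomial.C (k:ℚ) * Polynomial.X ^ (k+1) := by
      rw [nsmul_eq_mul]
      simp only [Polynomial.C_eq_natCast]
      push_cast [Nat.cast_sub hk]
      ring
    rw [h2, h3]
    ring

noncomputable def powSeries (n : ℕ) : PowerSeries ℚ :=
  PowerSeries.mk fun k => if k = 0 then 0 else (k : ℚ) ^ n

lemma powSeries_succ (n : ℕ) :
    powSeries (n+1) = PowerSeries.X * (d⁄dX ℚ (powSeries n)) := by
  ext k
  cases k with
  | zero => simp [powSeries]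
  | succ k =>
    rw [PowerSeries.coeff_succ_X_mul, PowerSeries.coeff_derivative, powSeries, powSeries,
      PowerSeries.coeff_mk, PowerSeries.coeff_mk]
    simp only [Nat.succ_ne_zero, if_false]
    cases k with
    | zero => simp
    | succ m => push_cast; ring

lemma worpitzky (n : ℕ) :
    ((Polynomial.X * eulerianExc n : Polynomial ℚ) : PowerSeries ℚ)
      = (1 - PowerSeries.X) ^ (n+1) * powSeries n := by
  induction n with
  | zero =>
    have hA : eulerianExc 0 = 1 := by
      rw [eulerianExc]
      have : ∀ σ : Equiv.Perm (Fin 0), excNum σ = 0 := fun σ => by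
        simp [excNum]
      simp only [this, pow_zero]
      rw [Finset.sum_const, Finset.card_univ]
      simp
    rw [hA, mul_one, pow_one]
    ext k
    rw [Polynomial.coeff_coe]
    cases k with
    | zero => simp [powSeries]
    | succ k =>
      rw [sub_mul, one_mul, map_sub, PowerSeries.coeff_succ_X_mul]
      cases k with
      | zero => simp [powSeries, Polynomial.coeff_X]
      | succ m =>
        simp [powSeries, Polynomial.coeff_X, PowerSeries.coeff_mk]
  | succ n ih =>
    have hD := congrArg (d⁄dX ℚ) ih
    rw [PowerSeries.derivative_coe, Derivation.leibniz, Derivation.leibniz_pow] at hD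
    have hd1 : d⁄dX ℚ (1 - PowerSeries.X) = -1 := by
      rw [map_sub]; simp
    rw [hd1] at hD
    have hderiv : Polynomial.derivative (Polynomial.X * eulerianExc n)
        = eulerianExc n + Polynomial.X * Polynomial.derivative (eulerianExc n) := by
      rw [Polynomial.derivative_mul, Polynomial.derivative_X, one_mul]
    rw [hderiv] at hD
    -- hD : ↑(A n + X * A n') = (1-X)^{n+1} • D(s n) + s n • ((n+1) • (1-X)^n • (-1))
    have hDsn : (1 - PowerSeries.X) ^ (n+1) * (d⁄dX ℚ (powSeries n))
        = ((eulerianExc n + Polynomial.X * Polynomial.derivative (eulerianExc n) : Polynomial ℚ)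
            : PowerSeries ℚ)
          + ((n : PowerSeries ℚ) + 1) * (1 - PowerSeries.X) ^ n * powSeries n := by
      rw [hD]
      simp only [smul_eq_mul, Nat.succ_sub_one, nsmul_eq_mul]
      push_cast
      ring
    rw [powSeries_succ]
    have key : (1 - PowerSeries.X) ^ (n+2) * (PowerSeries.X * d⁄dX ℚ (powSeries n))
        = PowerSeries.X * (1 - PowerSeries.X)
            * ((1 - PowerSeries.X) ^ (n+1) * (d⁄dX ℚ (powSeries n))) := by
      ring
    rw [key, hDsn]
    have expand1 : PowerSeries.X * (1 - PowerSeries.X)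
          * (((eulerianExc n + Polynomial.X * Polynomial.derivative (eulerianExc n) : Polynomial ℚ)
              : PowerSeries ℚ)
            + ((n : PowerSeries ℚ) + 1) * (1 - PowerSeries.X) ^ n * powSeries n)
        = PowerSeries.X * (1 - PowerSeries.X)
            * ((eulerianExc n + Polynomial.X * Polynomial.derivative (eulerianExc n) : Polynomial ℚ)
              : PowerSeries ℚ)
          + ((n : PowerSeries ℚ) + 1) * PowerSeries.X
            * ((1 - PowerSeries.X) ^ (n + 1) * powSeries n) := by
      ring
    rw [expand1, ← ih]
    have hnat : ((n : Polynomial ℚ) : PowerSeries ℚ) = (n : PowerSeries ℚ) := by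
      rw [← Polynomial.coeToPowerSeries.ringHom_apply, map_natCast]
    have hnc : ((n : PowerSeries ℚ) + 1) = (((n : Polynomial ℚ) + 1 : Polynomial ℚ) : PowerSeries ℚ) := by
      rw [Polynomial.coe_add, Polynomial.coe_one, hnat]
    have h1c : (1 - PowerSeries.X : PowerSeries ℚ)
        = ((1 - Polynomial.X : Polynomial ℚ) : PowerSeries ℚ) := by
      rw [Polynomial.coe_sub, Polynomial.coe_one, Polynomial.coe_X]
    have hXc : (PowerSeries.X : PowerSeries ℚ) = ((Polynomial.X : Polynomial ℚ) : PowerSeries ℚ) :=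
      Polynomial.coe_X.symm
    rw [hnc, h1c, hXc, ← Polynomial.coe_mul, ← Polynomial.coe_mul, ← Polynomial.coe_mul,
      ← Polynomial.coe_mul, ← Polynomial.coe_add, Polynomial.coe_inj]
    rw [eulerian_rec]
    simp only [Polynomial.C_eq_natCast]
    push_cast
    ring

noncomputable def sectPS (e : ℕ) (g : PowerSeries ℚ) : PowerSeries ℚ :=
  PowerSeries.mk fun k => if e ∣ k then PowerSeries.coeff k g else 0

noncomputable def expandPS (e : ℕ) (g : PowerSeries ℚ) : PowerSeries ℚ :=
  PowerSeries.mk fun k => if e ∣ k then PowerSeries.coeff (k / e) g else 0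

lemma coeff_sectPS (e k : ℕ) (g : PowerSeries ℚ) :
    PowerSeries.coeff k (sectPS e g) = if e ∣ k then PowerSeries.coeff k g else 0 :=
  PowerSeries.coeff_mk _ _

lemma coeff_expandPS (e k : ℕ) (g : PowerSeries ℚ) :
    PowerSeries.coeff k (expandPS e g) = if e ∣ k then PowerSeries.coeff (k / e) g else 0 :=
  PowerSeries.coeff_mk _ _

lemma coe_sect (e : ℕ) (f : Polynomial ℚ) :
    ((sect e f : Polynomial ℚ) : PowerSeries ℚ) = sectPS e (f : PowerSeries ℚ) := by
  ext k
  rw [Polynomial.coeff_coe, coeff_sect, coeff_sectPS, Polynomial.coeff_coe]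

lemma coe_expand (e : ℕ) (he : 0 < e) (p : Polynomial ℚ) :
    ((Polynomial.expand ℚ e p : Polynomial ℚ) : PowerSeries ℚ) = expandPS e (p : PowerSeries ℚ) := by
  ext k
  rw [Polynomial.coeff_coe, Polynomial.coeff_expand he, coeff_expandPS, Polynomial.coeff_coe]

lemma sectPS_expand_mul (e : ℕ) (he : 0 < e) (q : Polynomial ℚ) (g : PowerSeries ℚ) :
    sectPS e (((Polynomial.expand ℚ e q : Polynomial ℚ) : PowerSeries ℚ) * g)
      = ((Polynomial.expand ℚ e q : Polynomial ℚ) : PowerSeries ℚ) * sectPS e g := by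
  ext k
  rw [coeff_sectPS]
  by_cases hk : e ∣ k
  · rw [if_pos hk, PowerSeries.coeff_mul, PowerSeries.coeff_mul]
    refine Finset.sum_congr rfl fun p hp => ?_
    rw [Finset.HasAntidiagonal.mem_antidiagonal] at hp
    by_cases ha : e ∣ p.1
    · have hb : e ∣ p.2 := by
        have := Nat.dvd_sub hk ha
        rwa [← hp, Nat.add_sub_cancel_left] at this
      rw [coeff_sectPS, if_pos hb]
    · have h0 : (PowerSeries.coeff p.1) ((Polynomial.expand ℚ e q : Polynomial ℚ) : PowerSeries ℚ) = 0 := by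
        rw [Polynomial.coeff_coe, Polynomial.coeff_expand he, if_neg ha]
      rw [h0, zero_mul, zero_mul]
  · rw [if_neg hk, PowerSeries.coeff_mul]
    symm
    apply Finset.sum_eq_zero
    intro p hp
    rw [Finset.HasAntidiagonal.mem_antidiagonal] at hp
    by_cases ha : e ∣ p.1
    · have hb : ¬ e ∣ p.2 := fun h => hk (hp ▸ Nat.dvd_add ha h)
      rw [coeff_sectPS, if_neg hb, mul_zero]
    · have h0 : (PowerSeries.coeff p.1) ((Polynomial.expand ℚ e q : Polynomial ℚ) : PowerSeries ℚ) = 0 := by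
        rw [Polynomial.coeff_coe, Polynomial.coeff_expand he, if_neg ha]
      rw [h0, zero_mul]

lemma expandPS_mul (e : ℕ) (he : 0 < e) (q : Polynomial ℚ) (g : PowerSeries ℚ) :
    expandPS e ((q : PowerSeries ℚ) * g)
      = ((Polynomial.expand ℚ e q : Polynomial ℚ) : PowerSeries ℚ) * expandPS e g := by
  ext k
  rw [coeff_expandPS]
  by_cases hk : e ∣ k
  · obtain ⟨m, rfl⟩ := hk
    rw [if_pos (Dvd.intro m rfl), Nat.mul_div_cancel_left m he, PowerSeries.coeff_mul,
      PowerSeries.coeff_mul]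
    have hsub : (Finset.HasAntidiagonal.antidiagonal m).image (fun p : ℕ × ℕ => (e * p.1, e * p.2))
        ⊆ Finset.HasAntidiagonal.antidiagonal (e * m) := by
      intro p hp
      rw [Finset.mem_image] at hp
      obtain ⟨c, hc, rfl⟩ := hp
      rw [Finset.HasAntidiagonal.mem_antidiagonal] at hc ⊢
      rw [← Nat.mul_add, hc]
    have hinj : ∀ p ∈ Finset.HasAntidiagonal.antidiagonal m, ∀ r ∈ Finset.HasAntidiagonal.antidiagonal m,
        (fun p : ℕ × ℕ => (e * p.1, e * p.2)) p = (fun p : ℕ × ℕ => (e * p.1, e * p.2)) r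
          → p = r := by
      intro p _ r _ h
      have h1 : e * p.1 = e * r.1 := congrArg Prod.fst h
      have h2 : e * p.2 = e * r.2 := congrArg Prod.snd h
      exact Prod.ext (Nat.eq_of_mul_eq_mul_left he h1) (Nat.eq_of_mul_eq_mul_left he h2)
    have hzero : ∀ p ∈ Finset.HasAntidiagonal.antidiagonal (e * m),
        p ∉ (Finset.HasAntidiagonal.antidiagonal m).image (fun p : ℕ × ℕ => (e * p.1, e * p.2)) →
        (PowerSeries.coeff p.1) ((Polynomial.expand ℚ e q : Polynomial ℚ) : PowerSeries ℚ)
          * (PowerSeries.coeff p.2) (expandPS e g) = 0 := by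
      intro p hp hnp
      rw [Finset.HasAntidiagonal.mem_antidiagonal] at hp
      by_cases ha : e ∣ p.1
      · by_cases hb : e ∣ p.2
        · exfalso
          obtain ⟨c, hc⟩ := ha
          obtain ⟨d, hd⟩ := hb
          apply hnp
          rw [Finset.mem_image]
          refine ⟨(c, d), ?_, by rw [← hc, ← hd]⟩
          rw [Finset.HasAntidiagonal.mem_antidiagonal]
          have : e * (c + d) = e * m := by rw [Nat.mul_add, ← hc, ← hd, hp]
          exact Nat.eq_of_mul_eq_mul_left he this
        · rw [coeff_expandPS, if_neg hb, mul_zero]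
      · rw [Polynomial.coeff_coe, Polynomial.coeff_expand he, if_neg ha, zero_mul]
    rw [← Finset.sum_subset hsub hzero, Finset.sum_image hinj]
    refine Finset.sum_congr rfl fun p hp => ?_
    rw [Polynomial.coeff_coe, Polynomial.coeff_coe, Polynomial.coeff_expand he,
      if_pos (Dvd.intro p.1 rfl), Nat.mul_div_cancel_left p.1 he, coeff_expandPS,
      if_pos (Dvd.intro p.2 rfl), Nat.mul_div_cancel_left p.2 he]
  · rw [if_neg hk, PowerSeries.coeff_mul]
    symm
    apply Finset.sum_eq_zero
    intro p hp
    rw [Finset.HasAntidiagonal.mem_antidiagonal] at hp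
    by_cases ha : e ∣ p.1
    · have hb : ¬ e ∣ p.2 := fun h => hk (hp ▸ Nat.dvd_add ha h)
      rw [coeff_expandPS, if_neg hb, mul_zero]
    · rw [Polynomial.coeff_coe, Polynomial.coeff_expand he, if_neg ha, zero_mul]

lemma sectPS_powSeries (e n : ℕ) (he : 0 < e) :
    sectPS e (powSeries n) = PowerSeries.C ((e:ℚ)^n) * expandPS e (powSeries n) := by
  ext k
  rw [coeff_sectPS, PowerSeries.coeff_C_mul, coeff_expandPS]
  by_cases hk : e ∣ k
  · obtain ⟨m, rfl⟩ := hk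
    rw [if_pos (Dvd.intro m rfl), if_pos (Dvd.intro m rfl), Nat.mul_div_cancel_left m he,
      powSeries, PowerSeries.coeff_mk, PowerSeries.coeff_mk]
    by_cases hm : m = 0
    · subst hm; simp
    · rw [if_neg hm, if_neg (by positivity)]
      push_cast
      rw [mul_pow]
  · rw [if_neg hk, if_neg hk, mul_zero]

lemma core (n e : ℕ) (he : 0 < e) :
    sect e (Polynomial.X * eulerianExc n * (∑ j ∈ Finset.range e, Polynomial.X ^ j) ^ (n+1))
      = Polynomial.C ((e:ℚ)^n) * (Polynomial.X ^ e * Polynomial.expand ℚ e (eulerianExc n)) := by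
  rw [← Polynomial.coe_inj, coe_sect]
  set q : Polynomial ℚ := (1 - Polynomial.X)^(n+1) with hq
  have hgeom : ((Polynomial.X * eulerianExc n
        * (∑ j ∈ Finset.range e, Polynomial.X ^ j) ^ (n+1) : Polynomial ℚ) : PowerSeries ℚ)
      = ((Polynomial.expand ℚ e q : Polynomial ℚ) : PowerSeries ℚ) * powSeries n := by
    have h1 : Polynomial.expand ℚ e q = (1 - Polynomial.X^e)^(n+1) := by
      rw [hq, map_pow, map_sub, map_one, Polynomial.expand_X]
    have h2 : ((1 : Polynomial ℚ) - Polynomial.X^e)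
        = (1 - Polynomial.X) * (∑ j ∈ Finset.range e, Polynomial.X ^ j) := by
      have h := geom_sum_mul (Polynomial.X : Polynomial ℚ) e
      linear_combination h
    rw [h1, h2, mul_pow]
    simp only [Polynomial.coe_mul, Polynomial.coe_pow, Polynomial.coe_sub, Polynomial.coe_one,
      Polynomial.coe_X]
    have h3 := worpitzky n
    simp only [Polynomial.coe_mul, Polynomial.coe_X] at h3
    calc (PowerSeries.X : PowerSeries ℚ) * (eulerianExc n : PowerSeries ℚ)
          * ((∑ j ∈ Finset.range e, Polynomial.X ^ j : Polynomial ℚ) : PowerSeries ℚ) ^ (n+1)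
        = ((1 - PowerSeries.X) ^ (n+1) * powSeries n)
          * ((∑ j ∈ Finset.range e, Polynomial.X ^ j : Polynomial ℚ) : PowerSeries ℚ) ^ (n+1) := by
          rw [← h3]
      _ = (1 - PowerSeries.X) ^ (n + 1)
            * ((∑ j ∈ Finset.range e, Polynomial.X ^ j : Polynomial ℚ) : PowerSeries ℚ) ^ (n+1)
            * powSeries n := by ring
  rw [hgeom, sectPS_expand_mul e he, sectPS_powSeries e n he]
  have h4 : ((Polynomial.expand ℚ e q : Polynomial ℚ) : PowerSeries ℚ)
        * (PowerSeries.C ((e:ℚ)^n) * expandPS e (powSeries n))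
      = PowerSeries.C ((e:ℚ)^n)
        * (((Polynomial.expand ℚ e q : Polynomial ℚ) : PowerSeries ℚ) * expandPS e (powSeries n)) := by
    ring
  rw [h4, ← expandPS_mul e he]
  have h5 : ((q : Polynomial ℚ) : PowerSeries ℚ) * powSeries n
      = ((Polynomial.X * eulerianExc n : Polynomial ℚ) : PowerSeries ℚ) := by
    rw [worpitzky, hq]
    simp only [Polynomial.coe_pow, Polynomial.coe_sub, Polynomial.coe_one, Polynomial.coe_X]
  rw [h5, ← coe_expand e he, map_mul, Polynomial.expand_X, ← Polynomial.coe_C, ← Polynomial.coe_mul]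

/-- For a partition `ν = (ν₁, …, ν_l)` (a finite sequence of positive integers) with
`g(ν) = gcd(ν₁, …, ν_l)`, the polynomial `G_ν(t) = (t A_{l−1}(t) ∏ᵢ [νᵢ]_t)_{g(ν)}`
satisfies `G_ν(t) = Σ_{d ∣ g(ν)} μ(d) d^{l−1} t^d A_{l−1}(t^d) ∏ᵢ [νᵢ/d]_{t^d}`,
where `μ` is the Möbius function. -/
theorem Gnu_moebius_expansion (l : ℕ) (hl : 0 < l) (ν : Fin l → ℕ) (hν : ∀ i, 0 < ν i) :
    restrictCoprime (Finset.univ.gcd ν)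
        (Polynomial.X * eulerianExc (l - 1) *
          ∏ i, (∑ j ∈ Finset.range (ν i), Polynomial.X ^ j)) =
      ∑ d ∈ (Finset.univ.gcd ν).divisors,
        Polynomial.C (((ArithmeticFunction.moebius d : ℤ) : ℚ) * (d : ℚ) ^ (l - 1)) *
          Polynomial.X ^ d * (eulerianExc (l - 1)).comp (Polynomial.X ^ d) *
          ∏ i, (∑ j ∈ Finset.range (ν i / d), (Polynomial.X ^ d) ^ j) := by
  classical
  set g := Finset.univ.gcd ν with hgdef
  have hg0 : g ≠ 0 := by
    intro h
    have h0 := Finset.gcd_eq_zero_iff.mp h ⟨0, hl⟩ (Finset.mem_univ _)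
    exact (hν ⟨0, hl⟩).ne' h0
  rw [restrictCoprime_eq_sum_sect g hg0]
  refine Finset.sum_congr rfl fun d hd => ?_
  rw [Nat.mem_divisors] at hd
  have hd0 : 0 < d := Nat.pos_of_dvd_of_pos hd.1 (Nat.pos_of_ne_zero hg0)
  have hdvd : ∀ i, d ∣ ν i := fun i =>
    dvd_trans hd.1 (Finset.gcd_dvd (Finset.mem_univ i))
  have hprod : (∏ i, (∑ j ∈ Finset.range (ν i), (Polynomial.X : Polynomial ℚ) ^ j))
      = (∑ j ∈ Finset.range d, Polynomial.X ^ j) ^ l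
        * Polynomial.expand ℚ d (∏ i, (∑ j ∈ Finset.range (ν i / d), Polynomial.X ^ j)) := by
    calc (∏ i, (∑ j ∈ Finset.range (ν i), (Polynomial.X : Polynomial ℚ) ^ j))
        = ∏ i, ((∑ j ∈ Finset.range d, Polynomial.X ^ j)
            * Polynomial.expand ℚ d (∑ j ∈ Finset.range (ν i / d), Polynomial.X ^ j)) :=
          Finset.prod_congr rfl fun i _ => geom_factor d (ν i) (hdvd i)
      _ = (∏ _i : Fin l, (∑ j ∈ Finset.range d, (Polynomial.X : Polynomial ℚ) ^ j))
            * ∏ i, Polynomial.expand ℚ d (∑ j ∈ Finset.range (ν i / d), Polynomial.X ^ j) :=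
          Finset.prod_mul_distrib
      _ = _ := by
          rw [Finset.prod_const, Finset.card_univ, Fintype.card_fin, map_prod]
  rw [hprod]
  have hassoc : Polynomial.X * eulerianExc (l - 1)
        * ((∑ j ∈ Finset.range d, Polynomial.X ^ j) ^ l
          * Polynomial.expand ℚ d (∏ i, (∑ j ∈ Finset.range (ν i / d), Polynomial.X ^ j)))
      = (Polynomial.X * eulerianExc (l - 1) * (∑ j ∈ Finset.range d, Polynomial.X ^ j) ^ l)
        * Polynomial.expand ℚ d (∏ i, (∑ j ∈ Finset.range (ν i / d), Polynomial.X ^ j)) := by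
    ring
  rw [hassoc, sect_mul_expand d hd0]
  have hl1 : l - 1 + 1 = l := Nat.succ_pred_eq_of_pos hl
  have hpow : ((∑ j ∈ Finset.range d, Polynomial.X ^ j : Polynomial ℚ)) ^ l
      = ((∑ j ∈ Finset.range d, Polynomial.X ^ j : Polynomial ℚ)) ^ (l - 1 + 1) := by
    rw [hl1]
  rw [hpow, core (l - 1) d hd0]
  have hcomp : (eulerianExc (l - 1)).comp (Polynomial.X ^ d)
      = Polynomial.expand ℚ d (eulerianExc (l - 1)) :=
    (Polynomial.expand_eq_comp_X_pow d).symm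
  have hexpQ : Polynomial.expand ℚ d (∏ i, (∑ j ∈ Finset.range (ν i / d), Polynomial.X ^ j))
      = ∏ i, (∑ j ∈ Finset.range (ν i / d), ((Polynomial.X : Polynomial ℚ) ^ d) ^ j) := by
    rw [map_prod]
    exact Finset.prod_congr rfl fun i _ => expand_geom d _
  rw [hcomp, hexpQ]
  rw [map_mul Polynomial.C]
  ring
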